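/- There is a universal constant C ∈ (0,∞) such that for every p ∈ [1,∞), every n ∈ ℕ, every metric space (M,d_M), and every f : ℍ → M, ∑_{x ∈ B_n} ∑_{y ∈ B_n} d_M(f(x),f(y))^p ≤ C (2n)^{p+4} ∑_{x ∈ B_{3n}} (d_M(f(xa),f(x))^p + d_M(f(xb),f(x))^p). -/

import Mathlib

/-- The discrete Heisenberg group, as ℤ³ with the Heisenberg multiplication
(equivalently, unit upper-triangular 3×3 integer matrices). -/
@[ext]
structure DH where
  x : ℤ
  y : ℤ
  z : ℤ

namespace DH

instance : Mul DH := ⟨fun a b => ⟨a.x + b.x, a.y + b.y, a.z + b.z + a.x * b.y⟩⟩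
instance : One DH := ⟨⟨0, 0, 0⟩⟩
instance : Inv DH := ⟨fun a => ⟨-a.x, -a.y, -a.z + a.x * a.y⟩⟩

lemma mul_def (a b : DH) : a * b = ⟨a.x + b.x, a.y + b.y, a.z + b.z + a.x * b.y⟩ := rfl
lemma one_def : (1 : DH) = ⟨0, 0, 0⟩ := rfl
lemma inv_def (a : DH) : a⁻¹ = ⟨-a.x, -a.y, -a.z + a.x * a.y⟩ := rfl

instance : Group DH where
  mul_assoc a b c := by
    simp only [mul_def, mk.injEq]
    refine ⟨by ring, by ring, by ring⟩
  one_mul a := by simp [mul_def, one_def]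
  mul_one a := by simp [mul_def, one_def]
  inv_mul_cancel a := by
    simp only [mul_def, inv_def, one_def, mk.injEq]
    refine ⟨by ring, by ring, by ring⟩

/-- The generator `a`. -/
def gA : DH := ⟨1, 0, 0⟩

/-- The generator `b`. -/
def gB : DH := ⟨0, 1, 0⟩

/-- The commutator `c = aba⁻¹b⁻¹`, a generator of the center. -/
def gC : DH := gA * gB * gA⁻¹ * gB⁻¹

/-- Word length with respect to the symmetric generating set `{a, b, a⁻¹, b⁻¹}`. -/
noncomputable def wordLen (g : DH) : ℕ :=
  sInf {n | ∃ l : List DH, l.length = n ∧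
    (∀ s ∈ l, s ∈ ({gA, gB, gA⁻¹, gB⁻¹} : Set DH)) ∧ l.prod = g}

/-- The left-invariant word metric on the discrete Heisenberg group. -/
noncomputable def dW (g h : DH) : ℕ := wordLen (g⁻¹ * h)

/-- The closed ball of radius `n` centered at the identity. -/
def Ball (n : ℕ) : Set DH := {g | dW g 1 ≤ n}

end DH

namespace DH

/-- The generating set. -/
def gens : Set DH := {gA, gB, gA⁻¹, gB⁻¹}

lemma gA_inv : gA⁻¹ = ⟨-1, 0, 0⟩ := by simp [inv_def, gA]
lemma gB_inv : gB⁻¹ = ⟨0, -1, 0⟩ := by simp [inv_def, gB]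
lemma gC_eq : gC = ⟨0, 0, 1⟩ := by
  simp [gC, gA, gB, inv_def, mul_def]

lemma gens_inv {s : DH} (h : s ∈ gens) : s⁻¹ ∈ gens := by
  simp only [gens, Set.mem_insert_iff, Set.mem_singleton_iff] at h ⊢
  rcases h with rfl | rfl | rfl | rfl
  · exact Or.inr (Or.inr (Or.inl rfl))
  · exact Or.inr (Or.inr (Or.inr rfl))
  · exact Or.inl (by rw [inv_inv])
  · exact Or.inr (Or.inl (by rw [inv_inv]))

lemma gA_zpow (m : ℤ) : gA ^ m = ⟨m, 0, 0⟩ := by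
  induction m using Int.induction_on with
  | zero => simp [one_def]
  | succ k ih => rw [zpow_add_one, ih]; simp [mul_def, gA]
  | pred k ih => rw [zpow_sub_one, ih]; simp [mul_def, gA_inv] <;> ring

lemma gB_zpow (m : ℤ) : gB ^ m = ⟨0, m, 0⟩ := by
  induction m using Int.induction_on with
  | zero => simp [one_def]
  | succ k ih => rw [zpow_add_one, ih]; simp [mul_def, gB]
  | pred k ih => rw [zpow_sub_one, ih]; simp [mul_def, gB_inv] <;> ring

lemma gC_zpow (m : ℤ) : gC ^ m = ⟨0, 0, m⟩ := by
  induction m using Int.induction_on with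
  | zero => simp [one_def]
  | succ k ih => rw [zpow_add_one, ih]; simp [mul_def, gC_eq] <;> ring
  | pred k ih =>
      rw [zpow_sub_one, ih]
      have : gC⁻¹ = ⟨0, 0, -1⟩ := by simp [gC_eq, inv_def]
      simp [mul_def, this] <;> ring

lemma closure_gens (g : DH) : g ∈ Subgroup.closure gens := by
  have ha : gA ∈ Subgroup.closure gens := Subgroup.subset_closure (by simp [gens])
  have hb : gB ∈ Subgroup.closure gens := Subgroup.subset_closure (by simp [gens])
  have hc : gC ∈ Subgroup.closure gens := by
    refine mul_mem (mul_mem (mul_mem ha hb) (inv_mem ha)) (inv_mem hb)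
  have hg : g = gC ^ (g.z - g.x * g.y) * gA ^ g.x * gB ^ g.y := by
    rw [gA_zpow, gB_zpow, gC_zpow]
    simp [mul_def] <;> ring
  rw [hg]
  exact mul_mem (mul_mem (zpow_mem hc _) (zpow_mem ha _)) (zpow_mem hb _)

lemma exists_word (g : DH) : ∃ l : List DH, (∀ s ∈ l, s ∈ gens) ∧ l.prod = g := by
  refine Subgroup.closure_induction (k := gens)
    (p := fun x _ => ∃ l : List DH, (∀ s ∈ l, s ∈ gens) ∧ l.prod = x)
    ?_ ?_ ?_ ?_ (closure_gens g)
  · intro x hx; exact ⟨[x], by simpa using hx, by simp⟩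
  · exact ⟨[], by simp, by simp⟩
  · rintro x y _ _ ⟨l₁, h₁, rfl⟩ ⟨l₂, h₂, rfl⟩
    exact ⟨l₁ ++ l₂, by
      intro s hs
      rcases List.mem_append.1 hs with h | h
      · exact h₁ s h
      · exact h₂ s h, by rw [List.prod_append]⟩
  · rintro x _ ⟨l, hl, rfl⟩
    refine ⟨(l.map fun s => s⁻¹).reverse, ?_, (List.prod_inv_reverse l).symm⟩
    intro s hs
    rw [List.mem_reverse, List.mem_map] at hs
    obtain ⟨t, ht, rfl⟩ := hs
    exact gens_inv (hl t ht)

lemma wordLen_le_iff {g : DH} {n : ℕ} :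
    wordLen g ≤ n ↔ ∃ l : List DH, l.length ≤ n ∧ (∀ s ∈ l, s ∈ gens) ∧ l.prod = g := by
  constructor
  · intro h
    have hne : {k | ∃ l : List DH, l.length = k ∧
        (∀ s ∈ l, s ∈ ({gA, gB, gA⁻¹, gB⁻¹} : Set DH)) ∧ l.prod = g}.Nonempty := by
      obtain ⟨l, hl, hp⟩ := exists_word g
      exact ⟨l.length, l, rfl, hl, hp⟩
    obtain ⟨l, hlen, hl, hp⟩ := Nat.sInf_mem hne
    exact ⟨l, hlen.le.trans h, hl, hp⟩
  · rintro ⟨l, hlen, hl, hp⟩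
    exact le_trans (Nat.sInf_le ⟨l, rfl, hl, hp⟩) hlen

lemma mem_ball_iff {g : DH} {n : ℕ} :
    g ∈ Ball n ↔ ∃ l : List DH, l.length ≤ n ∧ (∀ s ∈ l, s ∈ gens) ∧ l.prod = g := by
  have hb : g ∈ Ball n ↔ wordLen g⁻¹ ≤ n := by
    simp only [Ball, Set.mem_setOf_eq, dW, mul_one]
  rw [hb, wordLen_le_iff]
  constructor
  · rintro ⟨l, hlen, hl, hp⟩
    refine ⟨(l.map fun s => s⁻¹).reverse, by simpa using hlen, ?_, ?_⟩
    · intro s hs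
      rw [List.mem_reverse, List.mem_map] at hs
      obtain ⟨t, ht, rfl⟩ := hs
      exact gens_inv (hl t ht)
    · rw [← List.prod_inv_reverse, hp, inv_inv]
  · rintro ⟨l, hlen, hl, hp⟩
    refine ⟨(l.map fun s => s⁻¹).reverse, by simpa using hlen, ?_, ?_⟩
    · intro s hs
      rw [List.mem_reverse, List.mem_map] at hs
      obtain ⟨t, ht, rfl⟩ := hs
      exact gens_inv (hl t ht)
    · rw [← List.prod_inv_reverse, hp]

lemma one_mem_ball (n : ℕ) : (1 : DH) ∈ Ball n :=
  mem_ball_iff.2 ⟨[], by simp, by simp, by simp⟩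

lemma mul_mem_ball {g h : DH} {m k : ℕ} (hg : g ∈ Ball m) (hh : h ∈ Ball k) :
    g * h ∈ Ball (m + k) := by
  obtain ⟨l₁, h₁, hw₁, hp₁⟩ := mem_ball_iff.1 hg
  obtain ⟨l₂, h₂, hw₂, hp₂⟩ := mem_ball_iff.1 hh
  refine mem_ball_iff.2 ⟨l₁ ++ l₂, ?_, ?_, ?_⟩
  · simpa using Nat.add_le_add h₁ h₂
  · intro s hs
    rcases List.mem_append.1 hs with h | h
    · exact hw₁ s h
    · exact hw₂ s h
  · rw [List.prod_append, hp₁, hp₂]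

lemma inv_mem_ball {g : DH} {n : ℕ} (hg : g ∈ Ball n) : g⁻¹ ∈ Ball n := by
  obtain ⟨l, h₁, hw, hp⟩ := mem_ball_iff.1 hg
  refine mem_ball_iff.2 ⟨(l.map fun s => s⁻¹).reverse, by simpa using h₁, ?_, ?_⟩
  · intro s hs
    rw [List.mem_reverse, List.mem_map] at hs
    obtain ⟨t, ht, rfl⟩ := hs
    exact gens_inv (hw t ht)
  · rw [← List.prod_inv_reverse, hp]

lemma gens_coord {s : DH} (h : s ∈ gens) : |s.x| ≤ 1 ∧ |s.y| ≤ 1 ∧ s.z = 0 := by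
  simp only [gens, Set.mem_insert_iff, Set.mem_singleton_iff] at h
  rcases h with rfl | rfl | rfl | rfl <;>
    simp [gA, gB, inv_def]

lemma word_coord_bound : ∀ l : List DH, (∀ s ∈ l, s ∈ gens) →
    |l.prod.x| ≤ (l.length : ℤ) ∧ |l.prod.y| ≤ (l.length : ℤ) ∧
      |l.prod.z| ≤ (l.length : ℤ) ^ 2 := by
  intro l
  induction l with
  | nil => intro _; simp [one_def]
  | cons s t ih =>
      intro h
      obtain ⟨hx, hy, hz⟩ := ih (fun u hu => h u (List.mem_cons_of_mem s hu))
      obtain ⟨hsx, hsy, hsz⟩ := gens_coord (h s List.mem_cons_self)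
      have hprod : (s :: t).prod = s * t.prod := List.prod_cons
      rw [hprod, mul_def]
      push_cast [List.length_cons]
      set k : ℤ := (t.length : ℤ)
      have hk : 0 ≤ k := Int.natCast_nonneg _
      refine ⟨?_, ?_, ?_⟩
      · calc |s.x + t.prod.x| ≤ |s.x| + |t.prod.x| := abs_add_le _ _
        _ ≤ 1 + k := add_le_add hsx hx
        _ = k + 1 := by ring
      · calc |s.y + t.prod.y| ≤ |s.y| + |t.prod.y| := abs_add_le _ _
        _ ≤ 1 + k := add_le_add hsy hy
        _ = k + 1 := by ring
      · have h1 : |s.x * t.prod.y| ≤ k := by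
          rw [abs_mul]
          calc |s.x| * |t.prod.y| ≤ 1 * k := by
                exact mul_le_mul hsx hy (abs_nonneg _) zero_le_one
          _ = k := one_mul k
        calc |s.z + t.prod.z + s.x * t.prod.y|
            ≤ |s.z + t.prod.z| + |s.x * t.prod.y| := abs_add_le _ _
        _ ≤ (|s.z| + |t.prod.z|) + k := add_le_add (abs_add_le _ _) h1
        _ = |t.prod.z| + k := by rw [hsz, abs_zero, zero_add]
        _ ≤ k ^ 2 + k := by exact add_le_add_left hz k
        _ ≤ (k + 1) ^ 2 := by nlinarith

lemma ball_coord {g : DH} {n : ℕ} (hg : g ∈ Ball n) :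
    |g.x| ≤ (n : ℤ) ∧ |g.y| ≤ (n : ℤ) ∧ |g.z| ≤ (n : ℤ) ^ 2 := by
  obtain ⟨l, hlen, hw, hp⟩ := mem_ball_iff.1 hg
  obtain ⟨hx, hy, hz⟩ := word_coord_bound l hw
  rw [hp] at hx hy hz
  have hk : (l.length : ℤ) ≤ (n : ℤ) := by exact_mod_cast hlen
  exact ⟨hx.trans hk, hy.trans hk,
    hz.trans (pow_le_pow_left₀ (Int.natCast_nonneg _) hk 2)⟩

lemma ball_finite (n : ℕ) : (Ball n).Finite := by
  have : Ball n ⊆ (fun p : ℤ × ℤ × ℤ => DH.mk p.1 p.2.1 p.2.2) ''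
      ((Set.Icc (-(n : ℤ)) n) ×ˢ (Set.Icc (-(n : ℤ)) n) ×ˢ
        (Set.Icc (-((n : ℤ) ^ 2)) ((n : ℤ) ^ 2))) := by
    intro g hg
    obtain ⟨hx, hy, hz⟩ := ball_coord hg
    exact ⟨(g.x, g.y, g.z), ⟨abs_le.1 hx, abs_le.1 hy, abs_le.1 hz⟩, rfl⟩
  exact Set.Finite.subset
    (((Set.finite_Icc _ _).prod ((Set.finite_Icc _ _).prod (Set.finite_Icc _ _))).image _) this

lemma ball_card (n : ℕ) :
    ((ball_finite n).toFinset.card : ℝ) ≤ (2 * n + 1) ^ 2 * (2 * n ^ 2 + 1) := by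
  have h : (ball_finite n).toFinset.card ≤
      ((Finset.Icc (-(n : ℤ)) n) ×ˢ (Finset.Icc (-(n : ℤ)) n) ×ˢ
        (Finset.Icc (-((n : ℤ) ^ 2)) ((n : ℤ) ^ 2))).card := by
    refine Finset.card_le_card_of_injOn (fun g => (g.x, g.y, g.z)) ?_ ?_
    · intro g hg
      rw [Set.Finite.coe_toFinset] at hg
      obtain ⟨hx, hy, hz⟩ := ball_coord hg
      simp only [Finset.coe_product, Set.mem_prod, Finset.mem_coe, Finset.mem_Icc]
      exact ⟨abs_le.1 hx, abs_le.1 hy, abs_le.1 hz⟩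
    · intro g _ h' _ hgh
      simp only [Prod.mk.injEq] at hgh
      exact DH.ext hgh.1 hgh.2.1 hgh.2.2
  have hcard : ((Finset.Icc (-(n : ℤ)) n) ×ˢ (Finset.Icc (-(n : ℤ)) n) ×ˢ
      (Finset.Icc (-((n : ℤ) ^ 2)) ((n : ℤ) ^ 2))).card =
      (2 * n + 1) * ((2 * n + 1) * (2 * n ^ 2 + 1)) := by
    rw [Finset.card_product, Finset.card_product, Int.card_Icc, Int.card_Icc]
    have h1 : ((n : ℤ) + 1 - -(n : ℤ)).toNat = 2 * n + 1 := by omega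
    have h2 : ((n : ℤ) ^ 2 + 1 - -((n : ℤ) ^ 2)).toNat = 2 * n ^ 2 + 1 := by
      have : ((n : ℤ)) ^ 2 = ((n ^ 2 : ℕ) : ℤ) := by push_cast; ring
      omega
    rw [h1, h2]
  calc ((ball_finite n).toFinset.card : ℝ) ≤ ((2 * n + 1) * ((2 * n + 1) * (2 * n ^ 2 + 1)) : ℕ) := by
        exact_mod_cast h.trans_eq hcard
  _ = (2 * n + 1) ^ 2 * (2 * n ^ 2 + 1) := by push_cast; ring

end DH

open Finset in
lemma DH.tsum_finite_set {S : Set DH} (hS : S.Finite) (h : DH → ℝ) :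
    ∑' x : S, h ↑x = ∑ x ∈ hS.toFinset, h x := by
  haveI := hS.fintype
  rw [tsum_fintype, Set.Finite.toFinset_eq_toFinset]
  exact Finset.sum_set_coe (f := h) S

open Finset in
lemma DH.dist_path {M : Type} [MetricSpace M] (f : DH → M) :
    ∀ (l : List DH) (x : DH),
      dist (f x) (f (x * l.prod)) ≤
        ∑ i ∈ Finset.range l.length,
          dist (f (x * (l.take (i + 1)).prod)) (f (x * (l.take i).prod)) := by
  intro l
  induction l with
  | nil => intro x; simp
  | cons s t ih =>
      intro x
      rw [List.length_cons, Finset.sum_range_succ']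
      simp only [List.take_succ_cons, List.prod_cons, List.take_zero, List.prod_nil,
        mul_one, ← mul_assoc]
      calc dist (f x) (f (x * s * t.prod))
          ≤ dist (f x) (f (x * s)) + dist (f (x * s)) (f (x * s * t.prod)) :=
            dist_triangle _ _ _
        _ ≤ _ := by
            rw [add_comm]
            exact add_le_add (ih (x * s)) (le_of_eq (dist_comm _ _))

open Finset in
lemma DH.sum_rpow_le {k : ℕ} (e : ℕ → ℝ) (he : ∀ i, 0 ≤ e i) {p : ℝ} (hp : 1 ≤ p) :
    (∑ i ∈ Finset.range k, e i) ^ p ≤ (k : ℝ) ^ (p - 1) * ∑ i ∈ Finset.range k, e i ^ p := by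
  rcases Nat.eq_zero_or_pos k with rfl | hk
  · simp [Real.zero_rpow (by linarith : p ≠ 0)]
  · have hk0 : (0 : ℝ) < k := by exact_mod_cast hk
    have h := Real.rpow_arith_mean_le_arith_mean_rpow (Finset.range k)
      (fun _ => 1 / (k : ℝ)) e (fun i _ => by positivity)
      (by rw [Finset.sum_const, Finset.card_range, nsmul_eq_mul]; field_simp)
      (fun i _ => he i) hp
    rw [← Finset.mul_sum, ← Finset.mul_sum,
      Real.mul_rpow (by positivity) (Finset.sum_nonneg fun i _ => he i)] at h
    have key : ((k : ℝ)) ^ p * ((1 / (k : ℝ)) ^ p) = 1 := by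
      rw [← Real.mul_rpow (le_of_lt hk0) (by positivity),
        mul_one_div_cancel (ne_of_gt hk0), Real.one_rpow]
    calc (∑ i ∈ Finset.range k, e i) ^ p
        = (k : ℝ) ^ p * ((1 / (k : ℝ)) ^ p * (∑ i ∈ Finset.range k, e i) ^ p) := by
          rw [← mul_assoc, key, one_mul]
      _ ≤ (k : ℝ) ^ p * ((1 / (k : ℝ)) * ∑ i ∈ Finset.range k, e i ^ p) :=
          mul_le_mul_of_nonneg_left h (Real.rpow_nonneg (le_of_lt hk0) p)
      _ = (k : ℝ) ^ (p - 1) * ∑ i ∈ Finset.range k, e i ^ p := by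
          rw [Real.rpow_sub hk0, Real.rpow_one]
          ring

open DH in
/-- Lemma 3.2: Kleiner's local Poincaré inequality on the discrete Heisenberg group,
for functions taking values in an arbitrary metric space. -/
theorem local_poincare_metric_space :
    ∃ C : ℝ, 0 < C ∧
      ∀ p : ℝ, 1 ≤ p → ∀ (n : ℕ) (M : Type) [MetricSpace M] (f : DH → M),
        ∑' x : Ball n, ∑' y : Ball n, dist (f ↑x) (f ↑y) ^ p ≤
          C * (2 * (n : ℝ)) ^ (p + 4) *
            ∑' x : Ball (3 * n),
              (dist (f (↑x * gA)) (f ↑x) ^ p + dist (f (↑x * gB)) (f ↑x) ^ p) := by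
  classical
  refine ⟨1024, by norm_num, ?_⟩
  intro p hp n M _ f
  have hp0 : (0 : ℝ) < p := lt_of_lt_of_le one_pos hp
  -- convert the tsums to finite sums
  rw [DH.tsum_finite_set (ball_finite n)
    (fun g => ∑' y : Ball n, dist (f g) (f ↑y) ^ p)]
  rw [DH.tsum_finite_set (ball_finite (3 * n))
    (fun g => dist (f (g * gA)) (f g) ^ p + dist (f (g * gB)) (f g) ^ p)]
  rw [Finset.sum_congr rfl (fun x _ => DH.tsum_finite_set (ball_finite n)
    (fun g => dist (f x) (f g) ^ p))]
  set Bn := (ball_finite n).toFinset with hBn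
  set W := (ball_finite (2 * n)).toFinset with hW
  set T := (ball_finite (3 * n)).toFinset with hT
  set E := ∑ z ∈ T, (dist (f (z * gA)) (f z) ^ p + dist (f (z * gB)) (f z) ^ p) with hE
  have hE0 : 0 ≤ E := Finset.sum_nonneg fun z _ => by positivity
  rcases Nat.eq_zero_or_pos n with rfl | hn
  · -- n = 0
    have hball0 : ∀ g ∈ Ball 0, g = (1 : DH) := by
      intro g hg
      obtain ⟨l, hlen, -, hprodl⟩ := mem_ball_iff.1 hg
      rw [Nat.le_zero, List.length_eq_zero_iff] at hlen
      rw [← hprodl, hlen, List.prod_nil]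
    have hL : ∑ x ∈ Bn, ∑ y ∈ Bn, dist (f x) (f y) ^ p = 0 := by
      refine Finset.sum_eq_zero fun x hx => Finset.sum_eq_zero fun y hy => ?_
      rw [hBn, Set.Finite.mem_toFinset] at hx hy
      rw [hball0 x hx, hball0 y hy, dist_self, Real.zero_rpow (ne_of_gt hp0)]
    rw [hL]
    rw [Nat.cast_zero, mul_zero, Real.zero_rpow (by linarith : p + 4 ≠ 0), mul_zero, zero_mul]
  · -- n ≥ 1
    have hn1 : (1 : ℝ) ≤ (n : ℝ) := by exact_mod_cast hn
    have hR : (0 : ℝ) < 2 * (n : ℝ) := by linarith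
    -- choose words for elements of Ball (2n)
    have hword : ∀ w ∈ Ball (2 * n), ∃ l : List DH,
        l.length ≤ 2 * n ∧ (∀ s ∈ l, s ∈ gens) ∧ l.prod = w :=
      fun w h => mem_ball_iff.1 h
    choose! L hL1 hL2 hL3 using hword
    -- Step A
    have stepA : ∀ x ∈ Bn, ∑ y ∈ Bn, dist (f x) (f y) ^ p ≤
        ∑ w ∈ W, dist (f x) (f (x * w)) ^ p := by
      intro x hx
      rw [hBn, Set.Finite.mem_toFinset] at hx
      have himg : ∑ w ∈ Bn.image (fun y => x⁻¹ * y), dist (f x) (f (x * w)) ^ p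
          = ∑ y ∈ Bn, dist (f x) (f y) ^ p := by
        rw [Finset.sum_image (fun a _ b _ h => mul_left_cancel h)]
        exact Finset.sum_congr rfl fun y _ => by rw [mul_inv_cancel_left]
      rw [← himg]
      refine Finset.sum_le_sum_of_subset_of_nonneg ?_ fun i _ _ => by positivity
      intro w hw
      rw [Finset.mem_image] at hw
      obtain ⟨y, hy, rfl⟩ := hw
      rw [hBn, Set.Finite.mem_toFinset] at hy
      rw [hW, Set.Finite.mem_toFinset]
      have := mul_mem_ball (inv_mem_ball hx) hy
      rwa [show n + n = 2 * n by ring] at this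
    -- Step B
    have stepB : ∀ x ∈ Bn, ∀ w ∈ W, dist (f x) (f (x * w)) ^ p ≤
        (2 * (n : ℝ)) ^ (p - 1) * ∑ i ∈ Finset.range (L w).length,
          dist (f (x * ((L w).take (i + 1)).prod)) (f (x * ((L w).take i).prod)) ^ p := by
      intro x _ w hw
      rw [hW, Set.Finite.mem_toFinset] at hw
      have h1 := DH.dist_path f (L w) x
      rw [hL3 w hw] at h1
      have h2 : dist (f x) (f (x * w)) ^ p ≤
          (∑ i ∈ Finset.range (L w).length,
            dist (f (x * ((L w).take (i + 1)).prod)) (f (x * ((L w).take i).prod))) ^ p :=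
        Real.rpow_le_rpow dist_nonneg h1 (by linarith)
      refine h2.trans ((DH.sum_rpow_le _ (fun i => dist_nonneg) hp).trans ?_)
      refine mul_le_mul_of_nonneg_right ?_ (Finset.sum_nonneg fun i _ => by positivity)
      refine Real.rpow_le_rpow (Nat.cast_nonneg _) ?_ (by linarith)
      have := hL1 w hw
      push_cast
      exact_mod_cast this
    -- Step C
    have stepC : ∀ w ∈ W, ∀ i ∈ Finset.range (L w).length,
        ∑ x ∈ Bn,
          dist (f (x * ((L w).take (i + 1)).prod)) (f (x * ((L w).take i).prod)) ^ p ≤ E := by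
      intro w hw i hi
      rw [hW, Set.Finite.mem_toFinset] at hw
      rw [Finset.mem_range] at hi
      have hpre : ∀ j, ((L w).take j).prod ∈ Ball (2 * n) := by
        intro j
        refine mem_ball_iff.2 ⟨(L w).take j, ?_, ?_, rfl⟩
        · exact le_trans (le_of_eq List.length_take)
            ((min_le_right _ _).trans (hL1 w hw))
        · exact fun s hs => hL2 w hw s (List.mem_of_mem_take hs)
      have htake : (L w).take (i + 1) = (L w).take i ++ [(L w)[i]] := by
        rw [List.take_succ, List.getElem?_eq_getElem hi, Option.toList_some]
      have hm1 : ((L w).take (i + 1)).prod = ((L w).take i).prod * (L w)[i] := by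
        rw [htake, List.prod_append, List.prod_cons, List.prod_nil, mul_one]
      have hsgen : (L w)[i] ∈ gens := hL2 w hw _ (List.getElem_mem hi)
      have key : ∃ m : DH, m ∈ Ball (2 * n) ∧ ∀ x : DH,
          dist (f (x * ((L w).take (i + 1)).prod)) (f (x * ((L w).take i).prod)) ^ p ≤
            dist (f (x * m * gA)) (f (x * m)) ^ p + dist (f (x * m * gB)) (f (x * m)) ^ p := by
        simp only [gens, Set.mem_insert_iff, Set.mem_singleton_iff] at hsgen
        rcases hsgen with h4 | h4 | h4 | h4
        · refine ⟨((L w).take i).prod, hpre i, fun x => ?_⟩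
          rw [hm1, h4, ← mul_assoc]
          exact le_add_of_nonneg_right (by positivity)
        · refine ⟨((L w).take i).prod, hpre i, fun x => ?_⟩
          rw [hm1, h4, ← mul_assoc]
          exact le_add_of_nonneg_left (by positivity)
        · refine ⟨((L w).take (i + 1)).prod, hpre (i + 1), fun x => ?_⟩
          have e1 : x * ((L w).take (i + 1)).prod * gA = x * ((L w).take i).prod := by
            rw [hm1, h4]; group
          rw [e1, dist_comm (f (x * ((L w).take (i + 1)).prod))]
          exact le_add_of_nonneg_right (by positivity)
        · refine ⟨((L w).take (i + 1)).prod, hpre (i + 1), fun x => ?_⟩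
          have e1 : x * ((L w).take (i + 1)).prod * gB = x * ((L w).take i).prod := by
            rw [hm1, h4]; group
          rw [e1, dist_comm (f (x * ((L w).take (i + 1)).prod))]
          exact le_add_of_nonneg_left (by positivity)
      obtain ⟨m, hm, hbd⟩ := key
      calc ∑ x ∈ Bn,
            dist (f (x * ((L w).take (i + 1)).prod)) (f (x * ((L w).take i).prod)) ^ p
          ≤ ∑ x ∈ Bn, (dist (f (x * m * gA)) (f (x * m)) ^ p +
              dist (f (x * m * gB)) (f (x * m)) ^ p) :=
            Finset.sum_le_sum fun x _ => hbd x
        _ = ∑ z ∈ Bn.image (fun x => x * m),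
              (dist (f (z * gA)) (f z) ^ p + dist (f (z * gB)) (f z) ^ p) :=
            (Finset.sum_image
              (f := fun z => dist (f (z * gA)) (f z) ^ p + dist (f (z * gB)) (f z) ^ p)
              (g := fun x => x * m) fun a _ b _ h => mul_right_cancel h).symm
        _ ≤ E := by
            refine Finset.sum_le_sum_of_subset_of_nonneg ?_ fun z _ _ => by positivity
            intro z hz
            rw [Finset.mem_image] at hz
            obtain ⟨x, hx, rfl⟩ := hz
            rw [hBn, Set.Finite.mem_toFinset] at hx
            rw [hT, Set.Finite.mem_toFinset]
            have := mul_mem_ball hx hm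
            rwa [show n + 2 * n = 3 * n by ring] at this
    -- |W| bound
    have hWcard : (W.card : ℝ) ≤ 1024 * (2 * (n : ℝ)) ^ (4 : ℕ) := by
      have h1 := ball_card (2 * n)
      rw [← hW] at h1
      have hcast : ((2 * n : ℕ) : ℝ) = 2 * (n : ℝ) := by push_cast; ring
      rw [hcast] at h1
      refine h1.trans ?_
      nlinarith [sq_nonneg ((n : ℝ)), sq_nonneg ((n : ℝ) - 1), hn1]
    -- assemble
    calc ∑ x ∈ Bn, ∑ y ∈ Bn, dist (f x) (f y) ^ p
        ≤ ∑ x ∈ Bn, ∑ w ∈ W, dist (f x) (f (x * w)) ^ p :=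
          Finset.sum_le_sum stepA
      _ ≤ ∑ x ∈ Bn, ∑ w ∈ W, (2 * (n : ℝ)) ^ (p - 1) *
            ∑ i ∈ Finset.range (L w).length,
              dist (f (x * ((L w).take (i + 1)).prod)) (f (x * ((L w).take i).prod)) ^ p :=
          Finset.sum_le_sum fun x hx => Finset.sum_le_sum fun w hw => stepB x hx w hw
      _ = (2 * (n : ℝ)) ^ (p - 1) * ∑ w ∈ W, ∑ i ∈ Finset.range (L w).length,
            ∑ x ∈ Bn,
              dist (f (x * ((L w).take (i + 1)).prod)) (f (x * ((L w).take i).prod)) ^ p := by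
          rw [Finset.sum_comm]
          simp only [← Finset.mul_sum]
          congr 1
          exact Finset.sum_congr rfl fun w _ => Finset.sum_comm
      _ ≤ (2 * (n : ℝ)) ^ (p - 1) * ∑ w ∈ W, ∑ i ∈ Finset.range (L w).length, E := by
          refine mul_le_mul_of_nonneg_left ?_ (Real.rpow_nonneg (le_of_lt hR) _)
          exact Finset.sum_le_sum fun w hw => Finset.sum_le_sum fun i hi => stepC w hw i hi
      _ ≤ (2 * (n : ℝ)) ^ (p - 1) * ∑ w ∈ W, (2 * (n : ℝ)) * E := by
          refine mul_le_mul_of_nonneg_left (Finset.sum_le_sum fun w hw => ?_)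
            (Real.rpow_nonneg (le_of_lt hR) _)
          rw [Finset.sum_const, Finset.card_range, nsmul_eq_mul]
          refine mul_le_mul_of_nonneg_right ?_ hE0
          rw [hW, Set.Finite.mem_toFinset] at hw
          have := hL1 w hw
          push_cast
          exact_mod_cast this
      _ = (2 * (n : ℝ)) ^ (p - 1) * ((W.card : ℝ) * ((2 * (n : ℝ)) * E)) := by
          rw [Finset.sum_const, nsmul_eq_mul]
      _ ≤ (2 * (n : ℝ)) ^ (p - 1) * ((1024 * (2 * (n : ℝ)) ^ (4 : ℕ)) * ((2 * (n : ℝ)) * E)) := by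
          refine mul_le_mul_of_nonneg_left ?_ (Real.rpow_nonneg (le_of_lt hR) _)
          exact mul_le_mul_of_nonneg_right hWcard (by positivity)
      _ = 1024 * (2 * (n : ℝ)) ^ (p + 4) * E := by
          rw [show p + 4 = (p - 1) + 5 by ring, Real.rpow_add hR,
            show ((5 : ℝ)) = ((5 : ℕ) : ℝ) by norm_num, Real.rpow_natCast]
          ring
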